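/- arXiv:1603.03765 — 2 statements merged into one kernel-verified Lean document; each statement's English description precedes it below -/
import Mathlib

section
/- For every even positive integer p and every integer m ≥ 1, the series ∑_{n=1}^∞ ([∑_{k=1}^{p/2} L_{(2k-1)·m·p^n}] − 1) / F_{m·p^{n+1}} converges with sum 1/F_{mp}. -/
/-- The Lucas numbers: L 0 = 2, L 1 = 1, L (n+2) = L n + L (n+1). -/
def lucas : ℕ → ℕ
  | 0 => 2
  | 1 => 1
  | n + 2 => lucas n + lucas (n + 1)

lemma lucas_succ (n : ℕ) : lucas (n + 1) = Nat.fib n + Nat.fib (n + 2) := by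
  induction n using Nat.twoStepInduction with
  | zero => rfl
  | one => rfl
  | more n ih1 ih2 =>
    show lucas (n + 1) + lucas (n + 2) = _
    rw [ih1, ih2]
    have h1 : Nat.fib (n + 2) = Nat.fib n + Nat.fib (n + 1) := Nat.fib_add_two
    have h2 : Nat.fib (n + 3) = Nat.fib (n + 1) + Nat.fib (n + 2) := Nat.fib_add_two
    have h3 : Nat.fib (n + 4) = Nat.fib (n + 2) + Nat.fib (n + 3) := Nat.fib_add_two
    show Nat.fib n + Nat.fib (n + 2) + (Nat.fib (n + 1) + Nat.fib (n + 3)) =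
      Nat.fib (n + 2) + Nat.fib (n + 4)
    omega

lemma cassini (n : ℕ) :
    (Nat.fib (n + 1) : ℤ) ^ 2 - Nat.fib n * Nat.fib (n + 2) = (-1) ^ n := by
  induction n with
  | zero => simp
  | succ n ih =>
    have h1 : (Nat.fib (n + 3) : ℤ) = Nat.fib (n + 1) + Nat.fib (n + 2) := by
      exact_mod_cast Nat.fib_add_two (n := n + 1)
    have h2 : (Nat.fib (n + 2) : ℤ) = Nat.fib n + Nat.fib (n + 1) := by
      exact_mod_cast Nat.fib_add_two (n := n)
    have : (Nat.fib (n + 2) : ℤ) ^ 2 - Nat.fib (n + 1) * Nat.fib (n + 3) =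
        -((Nat.fib (n + 1) : ℤ) ^ 2 - Nat.fib n * Nat.fib (n + 2)) := by
      linear_combination (Nat.fib (n + 2) : ℤ) * h2 - (Nat.fib (n + 1) : ℤ) * h1
    rw [this, ih]; ring

/-- Key identity: for `N` even, `fib (x + 2N) = fib x + fib N * lucas (x + N)`. -/
lemma key (N : ℕ) (hN : Even N) (x : ℕ) :
    (Nat.fib (x + 2 * N) : ℤ) = Nat.fib x + Nat.fib N * lucas (x + N) := by
  induction x using Nat.twoStepInduction with
  | zero =>
    -- fib (2N) = fib N * lucas N
    rcases N with _ | n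
    · simp
    · simp only [zero_add]
      rw [lucas_succ, two_mul]
      have : n + 1 + (n + 1) = n + (n + 1) + 1 := by ring
      rw [this, Nat.fib_add]
      push_cast
      ring
  | one =>
    -- fib (2N + 1) = 1 + fib N * lucas (N + 1)
    rw [add_comm 1 (2 * N), Nat.fib_two_mul_add_one, add_comm 1 N, lucas_succ]
    have hc := cassini N
    obtain ⟨j, rfl⟩ := hN
    push_cast
    have : ((-1 : ℤ)) ^ (j + j) = 1 := Even.neg_one_pow ⟨j, rfl⟩
    rw [this] at hc
    simp only [Nat.fib_one, Nat.cast_one]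
    linear_combination hc
  | more x ih1 ih2 =>
    have f3 : (Nat.fib (x + 2 + 2 * N) : ℤ) = Nat.fib (x + 2 * N) + Nat.fib (x + 1 + 2 * N) := by
      have : x + 2 + 2 * N = (x + 2 * N) + 2 := by ring
      rw [this, Nat.fib_add_two]
      push_cast
      have : x + 2 * N + 1 = x + 1 + 2 * N := by ring
      rw [this]
    have l3 : (lucas (x + 2 + N) : ℤ) = lucas (x + N) + lucas (x + 1 + N) := by
      have : x + 2 + N = (x + N) + 2 := by ring
      rw [this]
      show ((lucas (x + N) + lucas (x + N + 1) : ℕ) : ℤ) = _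
      push_cast
      have : x + N + 1 = x + 1 + N := by ring
      rw [this]
    have fx : (Nat.fib (x + 2) : ℤ) = Nat.fib x + Nat.fib (x + 1) := by
      exact_mod_cast Nat.fib_add_two (n := x)
    rw [f3, ih1, ih2, fx, l3]
    ring

lemma sum_lucas (N : ℕ) (hN : Even N) (q : ℕ) :
    (Nat.fib N : ℝ) * ∑ k ∈ Finset.Icc 1 q, (lucas ((2 * k - 1) * N) : ℝ) =
      Nat.fib (2 * q * N) := by
  induction q with
  | zero => simp
  | succ q ih =>
    rw [Finset.sum_Icc_succ_top (by omega), mul_add, ih]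
    have harg : (2 * (q + 1) - 1) * N = 2 * q * N + N := by
      have : 2 * (q + 1) - 1 = 2 * q + 1 := by omega
      rw [this]; ring
    have hk := key N hN (2 * q * N)
    have : (Nat.fib (2 * q * N + 2 * N) : ℝ) =
        Nat.fib (2 * q * N) + Nat.fib N * lucas (2 * q * N + N) := by
      exact_mod_cast hk
    have harg2 : 2 * (q + 1) * N = 2 * q * N + 2 * N := by ring
    rw [harg, harg2, this]

theorem stmt17 (p m : ℕ) (hp : Even p) (hp' : 0 < p) (hm : 1 ≤ m) :
    HasSum
      (fun n : ℕ =>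
        ((∑ k ∈ Finset.Icc 1 (p / 2), (lucas ((2 * k - 1) * m * p ^ (n + 1)) : ℝ)) - 1) /
          (Nat.fib (m * p ^ (n + 2)) : ℝ))
      (1 / (Nat.fib (m * p) : ℝ)) := by
  have hp2 : 2 ≤ p := by obtain ⟨j, rfl⟩ := hp; omega
  set g : ℕ → ℝ := fun n => 1 / (Nat.fib (m * p ^ (n + 1)) : ℝ) with hg
  have hNpos : ∀ n : ℕ, 0 < Nat.fib (m * p ^ (n + 1)) := by
    intro n
    rw [Nat.fib_pos]
    positivity
  have hterm : ∀ n : ℕ,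
      ((∑ k ∈ Finset.Icc 1 (p / 2), (lucas ((2 * k - 1) * m * p ^ (n + 1)) : ℝ)) - 1) /
          (Nat.fib (m * p ^ (n + 2)) : ℝ) = g n - g (n + 1) := by
    intro n
    set N := m * p ^ (n + 1) with hN
    have hNeven : Even N := by
      obtain ⟨j, rfl⟩ := hp
      have : N = m * ((j + j) ^ n * j + (j + j) ^ n * j) := by rw [hN]; ring
      exact ⟨m * ((j + j) ^ n * j), by rw [this]; ring⟩
    have hpN : m * p ^ (n + 2) = 2 * (p / 2) * N := by
      have : 2 * (p / 2) = p := by obtain ⟨j, hj⟩ := hp; omega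
      rw [this, hN]; ring
    have hsum := sum_lucas N hNeven (p / 2)
    have hargs : ∀ k, (2 * k - 1) * m * p ^ (n + 1) = (2 * k - 1) * N := fun k => by
      rw [hN]; ring
    have hfN : (0 : ℝ) < Nat.fib N := by exact_mod_cast hNpos n
    have hfpN : (0 : ℝ) < Nat.fib (m * p ^ (n + 2)) := by
      have : 0 < Nat.fib (m * p ^ (n + 2)) := by rw [Nat.fib_pos]; positivity
      exact_mod_cast this
    have hS : ∑ k ∈ Finset.Icc 1 (p / 2), (lucas ((2 * k - 1) * m * p ^ (n + 1)) : ℝ) =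
        (Nat.fib (m * p ^ (n + 2)) : ℝ) / Nat.fib N := by
      rw [eq_div_iff hfN.ne', mul_comm]
      simp_rw [hargs]
      rw [hsum, hpN]
    rw [hS, hg]
    have hN2 : m * p ^ (n + 1 + 1) = m * p ^ (n + 2) := by ring_nf
    simp only [hN2]
    rw [← hN]
    field_simp
  have hgto : Filter.Tendsto g Filter.atTop (nhds 0) := by
    have hidx : Filter.Tendsto (fun n : ℕ => m * p ^ (n + 1)) Filter.atTop Filter.atTop := by
      apply Filter.tendsto_atTop_mono (fun n => ?_)
        (tendsto_pow_atTop_atTop_of_one_lt hp2)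
      calc p ^ n ≤ p ^ (n + 1) := Nat.pow_le_pow_right (by omega) (by omega)
        _ ≤ m * p ^ (n + 1) := Nat.le_mul_of_pos_left _ hm
    have hfib : Filter.Tendsto Nat.fib Filter.atTop Filter.atTop :=
      Nat.fib_mono.tendsto_atTop_atTop
        (fun b => ⟨b + 2, le_trans Nat.fib_add_two_strictMono.le_apply (by simp)⟩)
    have h2 : Filter.Tendsto (fun n : ℕ => (Nat.fib (m * p ^ (n + 1)) : ℝ))
        Filter.atTop Filter.atTop := tendsto_natCast_atTop_atTop.comp (hfib.comp hidx)
    simp only [hg, one_div]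
    exact h2.inv_tendsto_atTop
  have hnn : ∀ n : ℕ, 0 ≤ g n - g (n + 1) := by
    intro n
    have hle : Nat.fib (m * p ^ (n + 1)) ≤ Nat.fib (m * p ^ (n + 1 + 1)) :=
      Nat.fib_mono (Nat.mul_le_mul_left m (Nat.pow_le_pow_right (by omega) (by omega)))
    have h1 : (0 : ℝ) < Nat.fib (m * p ^ (n + 1)) := by exact_mod_cast hNpos n
    have h2 : (Nat.fib (m * p ^ (n + 1)) : ℝ) ≤ Nat.fib (m * p ^ (n + 1 + 1)) := by
      exact_mod_cast hle
    simp only [hg, sub_nonneg]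
    exact one_div_le_one_div_of_le h1 h2
  have hmain : HasSum (fun n => g n - g (n + 1)) (g 0) := by
    rw [hasSum_iff_tendsto_nat_of_nonneg hnn]
    have hps : ∀ n : ℕ, ∑ i ∈ Finset.range n, (g i - g (i + 1)) = g 0 - g n :=
      fun n => Finset.sum_range_sub' g n
    simp_rw [hps]
    simpa using (tendsto_const_nhds.sub hgto)
  have hg0 : g 0 = 1 / (Nat.fib (m * p) : ℝ) := by simp [hg]
  rw [← hg0]
  exact hmain.congr_fun fun n => hterm n
end

section
/- For every odd integer p ≥ 3, the series ∑_{n=1}^∞ (-1)^{n(p-1)/2} · [∑_{k=1}^{(p-1)/2} (-1)^k · L_{2k·p^n}] / F_{p^{n+1}} converges with sum 1/F_p. -/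
open goldenRatio Real

theorem lucas_binet : ∀ n : ℕ, (lucas n : ℝ) = φ ^ n + ψ ^ n
  | 0 => by norm_num [lucas]
  | 1 => by simp [lucas]
  | n + 2 => by
    have h5 : (√5) ^ 2 = 5 := Real.sq_sqrt (by norm_num)
    rw [show lucas (n+2) = lucas n + lucas (n+1) from rfl]
    push_cast
    rw [lucas_binet n, lucas_binet (n+1)]
    linear_combination (φ ^ n) * goldenRatio_sq + (ψ ^ n) * goldenConj_sq
      - ((φ ^ n + ψ ^ n)/2) * h5

theorem key_s19 (u v : ℝ) (huv : u * v = -1) (q : ℕ) :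
    (u - v) * (1 + ∑ k ∈ Finset.Icc 1 q, (-1:ℝ)^k * (u^(2*k) + v^(2*k)))
      = (-1:ℝ)^q * (u^(2*q+1) - v^(2*q+1)) := by
  induction q with
  | zero => simp
  | succ q ih =>
    rw [Finset.sum_Icc_succ_top (by omega : 1 ≤ q + 1)]
    have h2 : 2*(q+1) = 2*q+2 := by ring
    rw [h2]
    linear_combination ih + (-1:ℝ)^q * (u^(2*q+1) - v^(2*q+1)) * huv

theorem main_id (q m : ℕ) (hm : Odd m) :
    (Nat.fib m : ℝ) * (1 + ∑ k ∈ Finset.Icc 1 q, (-1:ℝ)^k * (lucas (2*k*m) : ℝ))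
      = (-1:ℝ)^q * (Nat.fib ((2*q+1)*m) : ℝ) := by
  have huv : (φ^m) * (ψ^m) = -1 := by
    rw [← mul_pow, goldenRatio_mul_goldenConj, hm.neg_one_pow]
  have hk := key_s19 (φ^m) (ψ^m) huv q
  have hsum : ∀ k ∈ Finset.Icc 1 q,
      (-1:ℝ)^k * (lucas (2*k*m) : ℝ) = (-1:ℝ)^k * ((φ^m)^(2*k) + (ψ^m)^(2*k)) := by
    intro k _
    rw [lucas_binet, ← pow_mul, ← pow_mul, mul_comm m (2*k)]
  rw [Finset.sum_congr rfl hsum]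
  rw [Real.coe_fib_eq, Real.coe_fib_eq, mul_comm (2*q+1) m, pow_mul, pow_mul]
  linear_combination hk / √5

theorem stmt19 (p : ℕ) (hp : Odd p) (hp' : 3 ≤ p) :
    HasSum
      (fun n : ℕ =>
        (-1 : ℝ) ^ ((n + 1) * (p - 1) / 2) *
          (∑ k ∈ Finset.Icc 1 ((p - 1) / 2), (-1 : ℝ) ^ k * (lucas (2 * k * p ^ (n + 1)) : ℝ)) /
          (Nat.fib (p ^ (n + 2)) : ℝ))
      (1 / (Nat.fib p : ℝ)) := by
  obtain ⟨q, hq⟩ : ∃ q, p = 2 * q + 1 := hp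
  have hq2 : (p - 1) / 2 = q := by omega
  set f : ℕ → ℝ := fun n => ((-1:ℝ)^q)^n / (Nat.fib (p^(n+1)) : ℝ) with hf
  -- fib positivity
  have hfibpos : ∀ k : ℕ, (0:ℝ) < (Nat.fib (p^k) : ℝ) := fun k => by
    exact_mod_cast Nat.fib_pos.mpr (pow_pos (by omega) k)
  -- step 1 : each term equals f n - f (n+1)
  have hterm : ∀ n : ℕ,
      (-1 : ℝ) ^ ((n + 1) * (p - 1) / 2) *
          (∑ k ∈ Finset.Icc 1 ((p - 1) / 2), (-1 : ℝ) ^ k * (lucas (2 * k * p ^ (n + 1)) : ℝ)) /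
          (Nat.fib (p ^ (n + 2)) : ℝ) = f n - f (n + 1) := by
    intro n
    have hpodd : Odd p := ⟨q, by omega⟩
    have hmodd : Odd (p ^ (n+1)) := hpodd.pow
    have hid := main_id q (p^(n+1)) hmodd
    rw [show (2*q+1) * p^(n+1) = p^(n+2) by rw [← hq, ← pow_succ']] at hid
    have hexp : (n + 1) * (p - 1) / 2 = (n+1) * q := by
      rw [show p - 1 = 2*q by omega, show (n+1)*(2*q) = ((n+1)*q)*2 by ring,
        Nat.mul_div_cancel _ (by norm_num)]
    rw [hexp, hq2, pow_mul]
    have hm0 : (Nat.fib (p^(n+1)) : ℝ) ≠ 0 := (hfibpos (n+1)).ne'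
    have hM0 : (Nat.fib (p^(n+2)) : ℝ) ≠ 0 := (hfibpos (n+2)).ne'
    have hε2 : ((-1:ℝ)^q)^2 = 1 := by
      rw [← pow_mul, mul_comm, pow_mul]; norm_num
    simp only [hf]
    field_simp
    linear_combination (((-1:ℝ)^q)^(n+1)) * hid
      + ((-1:ℝ)^q)^n * (Nat.fib (p^(n+2)):ℝ) * hε2
  -- summability of f
  have hbound : ∀ n : ℕ, |f n| ≤ (1/3 : ℝ)^n := by
    intro n
    have h3 : (3:ℕ)^n ≤ Nat.fib (p^(n+1)) := by
      cases n with
      | zero =>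
        have h := Nat.fib_pos.mpr (show 0 < p by omega)
        simp only [pow_zero, zero_add, pow_one]
        exact h
      | succ n =>
        calc (3:ℕ)^(n+1) ≤ 3^(n+2) := Nat.pow_le_pow_right (by norm_num) (by omega)
          _ ≤ p^(n+2) := Nat.pow_le_pow_left hp' _
          _ ≤ Nat.fib (p^(n+2)) := by
            apply Nat.le_fib_self
            calc (5:ℕ) ≤ 3^2 := by norm_num
              _ ≤ 3^(n+2) := Nat.pow_le_pow_right (by norm_num) (by omega)
              _ ≤ p^(n+2) := Nat.pow_le_pow_left hp' _
    have h3' : (3:ℝ)^n ≤ (Nat.fib (p^(n+1)) : ℝ) := by exact_mod_cast h3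
    have : |f n| = 1 / (Nat.fib (p^(n+1)) : ℝ) := by
      rw [hf, abs_div, abs_pow, abs_pow, abs_neg, abs_one, one_pow, one_pow,
        abs_of_pos (hfibpos (n+1))]
    rw [this, show ((1:ℝ)/3)^n = 1/3^n by rw [div_pow, one_pow]]
    exact one_div_le_one_div_of_le (by positivity) h3'
  have hsumf : Summable f := by
    rw [← summable_abs_iff]
    exact Summable.of_nonneg_of_le (fun n => abs_nonneg _) hbound
      (summable_geometric_of_lt_one (by norm_num) (by norm_num))
  obtain ⟨a, ha⟩ := hsumf
  have h1 : HasSum (fun n => f (n + 1)) (a - f 0) := by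
    apply (hasSum_nat_add_iff 1).2
    simpa using ha
  have h2 : HasSum (fun n => f n - f (n + 1)) (f 0) := by
    simpa using ha.sub h1
  have hf0 : f 0 = 1 / (Nat.fib p : ℝ) := by simp [hf]
  simp only [hterm]
  rw [← hf0]
  exact h2
end
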